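/- arXiv:1312.3839 — 5 statements merged into one kernel-verified Lean document; each statement's English description precedes it below -/
import Mathlib

section
/- Let f : [a,b] → [c,d] be a continuous bijection with inverse f⁻¹, and let F : [a,b] → ℝ be an antiderivative of f (i.e., F'(x) = f(x) for all x ∈ [a,b]). Then the function G(y) = y·f⁻¹(y) − F(f⁻¹(y)) is an antiderivative of f⁻¹ on [c,d], i.e., G'(y) = f⁻¹(y) for all y ∈ [c,d]. -/
open Set MeasureTheory intervalIntegral

theorem inverse_antideriv
    (a b c d : ℝ) (hab : a < b) (hcd : c < d)
    (f g F : ℝ → ℝ)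
    (hf_cont : ContinuousOn f (Icc a b))
    (hf_bij : Set.BijOn f (Icc a b) (Icc c d))
    (hgf : ∀ x ∈ Icc a b, g (f x) = x)
    (hfg : ∀ y ∈ Icc c d, f (g y) = y)
    (hF : ∀ x ∈ Icc a b, HasDerivWithinAt F (f x) (Icc a b) x) :
    ∀ y ∈ Icc c d,
      HasDerivWithinAt (fun y => y * g y - F (g y)) (g y) (Icc c d) y := by
  -- g maps [c,d] into [a,b]
  have hg_maps : MapsTo g (Icc c d) (Icc a b) := by
    intro y hy
    obtain ⟨x, hx, rfl⟩ := hf_bij.surjOn hy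
    rw [hgf x hx]; exact hx
  -- g is continuous on [c,d] (inverse of a continuous bijection from a compact set)
  have hg_cont : ContinuousOn g (Icc c d) := by
    let e : Icc a b ≃ Icc c d :=
      { toFun := fun x => ⟨f x, hf_bij.mapsTo x.2⟩
        invFun := fun y => ⟨g y, hg_maps y.2⟩
        left_inv := fun x => Subtype.ext (hgf x x.2)
        right_inv := fun y => Subtype.ext (hfg y y.2) }
    have hec : Continuous (e : Icc a b → Icc c d) :=
      Continuous.subtype_mk (hf_cont.restrict) _
    let h := hec.homeoOfEquivCompactToT2 (f := e)
    rw [continuousOn_iff_continuous_restrict]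
    have : (Icc c d).domRestrict g = fun y : Icc c d => ((h.symm y : Icc a b) : ℝ) := by
      funext y
      show g (y : ℝ) = ((h.symm y : Icc a b) : ℝ)
      have he : h.symm y = e.symm y := rfl
      rw [he]
      rfl
    rw [this]
    exact continuous_subtype_val.comp h.symm.continuous
  -- F is continuous on [a,b]
  have hF_cont : ContinuousOn F (Icc a b) := fun x hx => (hF x hx).continuousWithinAt
  -- f is strictly monotone or antitone
  have hmono := ContinuousOn.strictMonoOn_of_injOn_Icc' hab.le hf_cont hf_bij.injOn
  intro y₀ hy₀
  set x₀ := g y₀ with hx₀def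
  have hx₀ : x₀ ∈ Icc a b := hg_maps hy₀
  have hfx₀ : f x₀ = y₀ := hfg y₀ hy₀
  -- key pointwise bound
  have key : ∀ y ∈ Icc c d,
      |(y * g y - F (g y)) - (y₀ * x₀ - F x₀) - (y - y₀) * x₀| ≤ |g y - x₀| * |y - y₀| := by
    intro y hy
    set x := g y with hxdef
    have hx : x ∈ Icc a b := hg_maps hy
    have hfx : f x = y := hfg y hy
    have huIcc_sub : uIcc x₀ x ⊆ Icc a b := uIcc_subset_Icc hx₀ hx
    -- f maps uIcc x₀ x into uIcc y₀ y
    have hmaps : MapsTo f (uIcc x₀ x) (uIcc y₀ y) := by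
      rcases hmono with hm | hm
      · have := (hm.monotoneOn.mono huIcc_sub).mapsTo_uIcc
        rwa [hfx₀, hfx] at this
      · have := (hm.antitoneOn.mono huIcc_sub).mapsTo_uIcc
        rwa [hfx₀, hfx] at this
    -- FTC
    have hint : IntervalIntegrable f volume x₀ x :=
      (hf_cont.mono huIcc_sub).intervalIntegrable
    have hftc : ∫ t in x₀..x, f t = F x - F x₀ := by
      apply intervalIntegral.integral_eq_sub_of_hasDeriv_right
        (hF_cont.mono huIcc_sub) ?_ hint
      intro t ht
      have ht' : t ∈ Ioo a b := by
        constructor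
        · exact lt_of_le_of_lt (le_min hx₀.1 hx.1) ht.1
        · exact lt_of_lt_of_le ht.2 (max_le hx₀.2 hx.2)
      have : HasDerivAt F (f t) t :=
        (hF t (Ioo_subset_Icc_self ht')).hasDerivAt (Icc_mem_nhds ht'.1 ht'.2)
      exact this.hasDerivWithinAt
    -- rewrite the difference as an integral
    have hintc : IntervalIntegrable (fun _ : ℝ => y) volume x₀ x :=
      intervalIntegrable_const
    have heq : (y * x - F x) - (y₀ * x₀ - F x₀) - (y - y₀) * x₀
        = ∫ t in x₀..x, (y - f t) := by
      rw [intervalIntegral.integral_sub hintc hint,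
        intervalIntegral.integral_const, hftc, smul_eq_mul]
      ring
    rw [heq]
    have hbound : ∀ t ∈ uIoc x₀ x, ‖y - f t‖ ≤ |y - y₀| := by
      intro t ht
      have hft : f t ∈ uIcc y₀ y := hmaps (uIoc_subset_uIcc ht)
      have := Real.dist_right_le_of_mem_uIcc hft
      rw [Real.dist_eq, Real.dist_eq] at this
      calc ‖y - f t‖ = |f t - y| := by rw [Real.norm_eq_abs, abs_sub_comm]
        _ ≤ |y₀ - y| := this
        _ = |y - y₀| := abs_sub_comm _ _
    have := intervalIntegral.norm_integral_le_of_norm_le_const hbound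
    calc |∫ t in x₀..x, (y - f t)| ≤ |y - y₀| * |x - x₀| := this
      _ = |g y - x₀| * |y - y₀| := by rw [mul_comm]
  -- conclude using little-o characterization
  rw [hasDerivWithinAt_iff_isLittleO]
  rw [Asymptotics.isLittleO_iff]
  intro ε hε
  have hcw : ContinuousWithinAt g (Icc c d) y₀ := hg_cont y₀ hy₀
  have htend : Filter.Tendsto (fun y => |g y - x₀|) (nhdsWithin y₀ (Icc c d)) (nhds 0) := by
    have ht : Filter.Tendsto g (nhdsWithin y₀ (Icc c d)) (nhds x₀) := hcw
    have h2 := Filter.Tendsto.sub ht (tendsto_const_nhds (x := x₀))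
    rw [sub_self] at h2
    simpa using h2.abs
  have hev : ∀ᶠ y in nhdsWithin y₀ (Icc c d), |g y - x₀| ≤ ε := by
    have := htend.eventually (eventually_le_nhds (by simpa using hε : (0:ℝ) < ε))
    simpa using this
  filter_upwards [hev, self_mem_nhdsWithin] with y hy1 hy2
  have := key y hy2
  have hb : |(y * g y - F (g y)) - (y₀ * x₀ - F x₀) - (y - y₀) * x₀| ≤ ε * |y - y₀| := by
    calc |(y * g y - F (g y)) - (y₀ * x₀ - F x₀) - (y - y₀) * x₀|
        ≤ |g y - x₀| * |y - y₀| := this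
      _ ≤ ε * |y - y₀| := by
          apply mul_le_mul_of_nonneg_right hy1 (abs_nonneg _)
  simpa [Real.norm_eq_abs, smul_eq_mul, mul_comm] using hb
end

section
/- Let f : [a,b] → [c,d] be a continuous strictly increasing bijection with f(a) = c, and let y ∈ [c,d]. Then the region D = {(t,x) : c ≤ t ≤ y, a ≤ x ≤ f⁻¹(t)} ⊆ ℝ² equals the region D' = {(t,x) : a ≤ x ≤ f⁻¹(y), f(x) ≤ t ≤ y}, and consequently (by Fubini/Tonelli) ∫_{c}^{y} (f⁻¹(t) − a) dt = ∫_{a}^{f⁻¹(y)} (y − f(x)) dx. -/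
open Set MeasureTheory intervalIntegral
open scoped Topology
open Filter

theorem fubini_region_eq_and_integral
    (a b c d : ℝ) (hab : a < b) (hcd : c < d)
    (f g : ℝ → ℝ)
    (hf_cont : ContinuousOn f (Icc a b))
    (hf_mono : StrictMonoOn f (Icc a b))
    (hf_bij : Set.BijOn f (Icc a b) (Icc c d))
    (hfa : f a = c)
    (hgf : ∀ x ∈ Icc a b, g (f x) = x)
    (hfg : ∀ y ∈ Icc c d, f (g y) = y) :
    ∀ y ∈ Icc c d,
      {p : ℝ × ℝ | c ≤ p.1 ∧ p.1 ≤ y ∧ a ≤ p.2 ∧ p.2 ≤ g p.1} =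
        {p : ℝ × ℝ | a ≤ p.2 ∧ p.2 ≤ g y ∧ f p.2 ≤ p.1 ∧ p.1 ≤ y} ∧
      ∫ t in c..y, (g t - a) = ∫ x in a..(g y), (y - f x) := by
  have hmemab : a ∈ Icc a b := ⟨le_refl a, hab.le⟩
  have hgc : g c = a := by rw [← hfa]; exact hgf a hmemab
  have hgmaps : ∀ t ∈ Icc c d, g t ∈ Icc a b := by
    intro t ht
    obtain ⟨x, hx, rfl⟩ := hf_bij.surjOn ht
    rw [hgf x hx]; exact hx
  have key : ∀ x ∈ Icc a b, ∀ t ∈ Icc c d, (f x ≤ t ↔ x ≤ g t) := by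
    intro x hx t ht
    conv_lhs => rw [← hfg t ht]
    exact hf_mono.le_iff_le hx (hgmaps t ht)
  have hgmono : MonotoneOn g (Icc c d) := by
    intro s hs t ht hst
    exact (key (g s) (hgmaps s hs) t ht).mp (by rw [hfg s hs]; exact hst)
  -- continuity of g on Icc c d
  have hgcont : ContinuousOn g (Icc c d) := by
    have hcs : CompactSpace (Icc a b) := isCompact_iff_compactSpace.mp isCompact_Icc
    set F : Icc a b → Icc c d := fun x => ⟨f x, hf_bij.mapsTo x.2⟩ with hF
    have hFc : Continuous F :=
      Continuous.subtype_mk (continuousOn_iff_continuous_restrict.mp hf_cont) _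
    have hFbij : Function.Bijective F := by
      constructor
      · intro x y h
        exact Subtype.ext (hf_bij.injOn x.2 y.2 (congrArg Subtype.val h))
      · intro y
        obtain ⟨x, hx, hfx⟩ := hf_bij.surjOn y.2
        exact ⟨⟨x, hx⟩, Subtype.ext hfx⟩
    let e : Icc a b ≃ Icc c d := Equiv.ofBijective F hFbij
    have hec : Continuous (e : Icc a b → Icc c d) := hFc
    let h := Continuous.homeoOfEquivCompactToT2 (f := e) hec
    have hkey : ∀ y : Icc c d, g ↑y = ↑(h.symm y) := by
      intro y
      have hx : f ↑(h.symm y) = ↑y := congrArg Subtype.val (h.apply_symm_apply y)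
      rw [← hx, hgf _ (h.symm y).2]
    rw [continuousOn_iff_continuous_restrict]
    have : restrict (Icc c d) g = fun y => ↑(h.symm y) := funext fun y => hkey y
    rw [show (Icc c d).domRestrict g = fun y => ↑(h.symm y) from this]
    exact continuous_subtype_val.comp h.symm.continuous
  refine fun y hy => ⟨?_, ?_⟩
  · -- set equality
    ext ⟨t, x⟩
    simp only [mem_setOf_eq]
    constructor
    · rintro ⟨hct, hty, hax, hxg⟩
      have ht : t ∈ Icc c d := ⟨hct, hty.trans hy.2⟩
      have hx : x ∈ Icc a b := ⟨hax, hxg.trans (hgmaps t ht).2⟩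
      exact ⟨hax, hxg.trans (hgmono ht hy hty), (key x hx t ht).mpr hxg, hty⟩
    · rintro ⟨hax, hxgy, hfxt, hty⟩
      have hx : x ∈ Icc a b := ⟨hax, hxgy.trans (hgmaps y hy).2⟩
      have hct : c ≤ t := by
        rw [← hfa]
        exact ((hf_mono.le_iff_le hmemab hx).mpr hax).trans hfxt
      have ht : t ∈ Icc c d := ⟨hct, hty.trans hy.2⟩
      exact ⟨hct, hty, hax, (key x hx t ht).mp hfxt⟩
  · -- integral equality
    have hfint : ∀ s t : ℝ, s ∈ Icc a b → t ∈ Icc a b →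
        IntervalIntegrable f volume s t := fun s t hs ht =>
      (hf_cont.mono (uIcc_subset_Icc hs ht)).intervalIntegrable
    have hgint : ∀ s t : ℝ, s ∈ Icc c d → t ∈ Icc c d →
        IntervalIntegrable (fun w => g w - a) volume s t := fun s t hs ht =>
      ((hgcont.mono (uIcc_subset_Icc hs ht)).sub continuousOn_const).intervalIntegrable
    -- derivative of the left-hand primitive
    have derivF : ∀ u ∈ Ico c d,
        HasDerivWithinAt (fun u => ∫ t in c..u, (g t - a)) (g u - a) (Ici u) u := by
      intro u hu
      have hud : u < d := hu.2
      have hucd : u ∈ Icc c d := ⟨hu.1, hud.le⟩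
      have hIoc_mem : Ioc u d ∈ 𝓝[>] u := by
        rw [← Ioi_inter_Iic]
        exact Filter.inter_mem self_mem_nhdsWithin
          (mem_nhdsWithin_of_mem_nhds (Iic_mem_nhds hud))
      have hnhds : 𝓝[>] u = 𝓝[Ioc u d] u := by
        rw [← Ioi_inter_Iic, nhdsWithin_inter_of_mem']
        exact mem_nhdsWithin_of_mem_nhds (Iic_mem_nhds hud)
      have cwa : ContinuousWithinAt (fun t => g t - a) (Ioi u) u := by
        have h1 : ContinuousWithinAt g (Ioc u d) u :=
          (hgcont u hucd).mono (Ioc_subset_Icc_self.trans (Icc_subset_Icc hu.1 le_rfl))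
        have h2 : ContinuousWithinAt g (Ioi u) u := by
          unfold ContinuousWithinAt at h1 ⊢
          rw [hnhds]; exact h1
        exact h2.sub continuousWithinAt_const
      have hmeas : StronglyMeasurableAtFilter (fun t => g t - a) (𝓝[>] u) :=
        ⟨Ioc u d, hIoc_mem,
          ((hgcont.mono (Ioc_subset_Icc_self.trans (Icc_subset_Icc hu.1 le_rfl))).sub
            continuousOn_const).aestronglyMeasurable measurableSet_Ioc⟩
      exact intervalIntegral.integral_hasDerivWithinAt_right
        (hgint c u ⟨le_refl c, hcd.le⟩ hucd) hmeas cwa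
    -- derivative of the right-hand side as a function of the upper parameter
    have derivG : ∀ u ∈ Ico c d,
        HasDerivWithinAt (fun u => ∫ x in a..(g u), (u - f x)) (g u - a) (Ici u) u := by
      intro u hu
      have hud : u < d := hu.2
      have hucd : u ∈ Icc c d := ⟨hu.1, hud.le⟩
      have hgu := hgmaps u hucd
      rw [hasDerivWithinAt_iff_tendsto_slope, Ici_sdiff_left]
      have hIoc_mem : Ioc u d ∈ 𝓝[>] u := by
        rw [← Ioi_inter_Iic]
        exact Filter.inter_mem self_mem_nhdsWithin
          (mem_nhdsWithin_of_mem_nhds (Iic_mem_nhds hud))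
      have hnhds : 𝓝[>] u = 𝓝[Ioc u d] u := by
        rw [← Ioi_inter_Iic, nhdsWithin_inter_of_mem']
        exact mem_nhdsWithin_of_mem_nhds (Iic_mem_nhds hud)
      have tg : Filter.Tendsto g (𝓝[>] u) (𝓝 (g u)) := by
        have h1 : ContinuousWithinAt g (Icc c d) u := hgcont u hucd
        rw [hnhds]
        exact h1.mono_left (nhdsWithin_mono u (Ioc_subset_Icc_self.trans
          (Icc_subset_Icc hu.1 le_rfl)))
      -- sandwich
      have bound : ∀ v ∈ Ioc u d,
          g u - a ≤ slope (fun u => ∫ x in a..(g u), (u - f x)) u v ∧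
          slope (fun u => ∫ x in a..(g u), (u - f x)) u v ≤ g u - a + (g v - g u) := by
        intro v hv
        have hvu : (0:ℝ) < v - u := sub_pos.mpr hv.1
        have hvcd : v ∈ Icc c d := ⟨hu.1.trans hv.1.le, hv.2⟩
        have hgv := hgmaps v hvcd
        have hguv : g u ≤ g v := hgmono hucd hvcd hv.1.le
        have I1 : IntervalIntegrable (fun x => v - f x) volume a (g u) :=
          (_root_.intervalIntegrable_const).sub (hfint a (g u) hmemab hgu)
        have I2 : IntervalIntegrable (fun x => v - f x) volume (g u) (g v) :=
          (_root_.intervalIntegrable_const).sub (hfint (g u) (g v) hgu hgv)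
        have I3 : IntervalIntegrable (fun x => u - f x) volume a (g u) :=
          (_root_.intervalIntegrable_const).sub (hfint a (g u) hmemab hgu)
        set R : ℝ := ∫ x in (g u)..(g v), (v - f x) with hR
        have hsplit : (∫ x in a..(g v), (v - f x)) =
            (∫ x in a..(g u), (v - f x)) + R :=
          (intervalIntegral.integral_add_adjacent_intervals I1 I2).symm
        have hdiffconst : (∫ x in a..(g u), (v - f x)) - (∫ x in a..(g u), (u - f x))
            = (g u - a) * (v - u) := by
          rw [← intervalIntegral.integral_sub I1 I3]
          simp only [sub_sub_sub_cancel_right]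
          rw [intervalIntegral.integral_const, smul_eq_mul]
        have hfle : ∀ x ∈ Icc (g u) (g v), f x ≤ v := by
          intro x hx
          have hxab : x ∈ Icc a b := ⟨hgu.1.trans hx.1, hx.2.trans hgv.2⟩
          calc f x ≤ f (g v) :=
                (hf_mono.le_iff_le hxab hgv).mpr hx.2
            _ = v := hfg v hvcd
        have hfge : ∀ x ∈ Icc (g u) (g v), u ≤ f x := by
          intro x hx
          have hxab : x ∈ Icc a b := ⟨hgu.1.trans hx.1, hx.2.trans hgv.2⟩
          calc u = f (g u) := (hfg u hucd).symm
            _ ≤ f x := (hf_mono.le_iff_le hgu hxab).mpr hx.1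
        have hR0 : 0 ≤ R :=
          intervalIntegral.integral_nonneg hguv
            (fun x hx => sub_nonneg.mpr (hfle x hx))
        have hRle : R ≤ (g v - g u) * (v - u) := by
          have := intervalIntegral.integral_mono_on hguv I2
            (_root_.intervalIntegrable_const (c := v - u))
            (fun x hx => by linarith [hfge x hx])
          rwa [intervalIntegral.integral_const, smul_eq_mul] at this
        have hslope : slope (fun u => ∫ x in a..(g u), (u - f x)) u v
            = (g u - a) + R / (v - u) := by
          rw [slope_def_field]
          rw [hsplit]
          field_simp
          ring_nf
          nlinarith [hdiffconst]
        constructor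
        · rw [hslope]
          have : 0 ≤ R / (v - u) := div_nonneg hR0 hvu.le
          linarith
        · rw [hslope]
          have : R / (v - u) ≤ g v - g u := (div_le_iff₀ hvu).mpr (by linarith)
          linarith
      have hub : Filter.Tendsto (fun v => g u - a + (g v - g u)) (𝓝[>] u)
          (𝓝 (g u - a)) := by
        have : Filter.Tendsto (fun v => g u - a + (g v - g u)) (𝓝[>] u)
            (𝓝 (g u - a + (g u - g u))) :=
          (tendsto_const_nhds.add (tg.sub tendsto_const_nhds))
        simpa using this
      refine tendsto_of_tendsto_of_tendsto_of_le_of_le' tendsto_const_nhds hub ?_ ?_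
      · filter_upwards [hIoc_mem] with v hv using (bound v hv).1
      · filter_upwards [hIoc_mem] with v hv using (bound v hv).2
    -- continuity of both sides
    have hFcont : ContinuousOn (fun u => ∫ t in c..u, (g t - a)) (Icc c d) := by
      have := intervalIntegral.continuousOn_primitive_interval
        (f := fun w => g w - a) (μ := volume) (a := c) (b := d)
        (by rw [uIcc_of_le hcd.le]
            exact ((hgcont.sub continuousOn_const)).integrableOn_compact isCompact_Icc)
      rwa [uIcc_of_le hcd.le] at this
    have hΦcont : ContinuousOn (fun w => ∫ x in a..w, f x) (Icc a b) := by
      have := intervalIntegral.continuousOn_primitive_interval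
        (f := f) (μ := volume) (a := a) (b := b)
        (by rw [uIcc_of_le hab.le]
            exact hf_cont.integrableOn_compact isCompact_Icc)
      rwa [uIcc_of_le hab.le] at this
    have hGalt : ∀ u ∈ Icc c d, (∫ x in a..(g u), (u - f x))
        = u * (g u - a) - ∫ x in a..(g u), f x := by
      intro u hu
      rw [intervalIntegral.integral_sub _root_.intervalIntegrable_const
          (hfint a (g u) hmemab (hgmaps u hu)),
        intervalIntegral.integral_const, smul_eq_mul]
      ring
    have hGcont : ContinuousOn (fun u => ∫ x in a..(g u), (u - f x)) (Icc c d) := by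
      refine ContinuousOn.congr ?_ hGalt
      exact (continuousOn_id.mul (hgcont.sub continuousOn_const)).sub
        (hΦcont.comp hgcont (fun t ht => hgmaps t ht))
    have hzero : (∫ t in c..c, (g t - a)) = ∫ x in a..(g c), (c - f x) := by
      rw [hgc]; simp
    exact eq_of_has_deriv_right_eq derivF derivG hFcont hGcont hzero y hy
end

section
/- (Stieltjes change of variable for inverse functions) Let f : [a,b] → [c,d] be a continuous strictly increasing bijection. Then for y ∈ [c,d], the Riemann–Stieltjes integral ∫_{c}^{y} f⁻¹(t) dt equals the Riemann–Stieltjes integral ∫_{a}^{f⁻¹(y)} x df(x). -/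
open Set MeasureTheory intervalIntegral

theorem stieltjes_change_of_variable_inverse
    (a b c d : ℝ) (hab : a < b) (hcd : c < d)
    (φ : StieltjesFunction ℝ) (g : ℝ → ℝ)
    (hφ_cont : ContinuousOn φ (Icc a b))
    (hφ_mono : StrictMonoOn φ (Icc a b))
    (hφ_bij : Set.BijOn φ (Icc a b) (Icc c d))
    (hφa : φ a = c) (hφb : φ b = d)
    (hgf : ∀ x ∈ Icc a b, g (φ x) = x)
    (hfg : ∀ y ∈ Icc c d, φ (g y) = y) :
    ∀ y ∈ Icc c d,
      ∫ t in c..y, g t = ∫ x in Set.Ioc a (g y), x ∂φ.measure := by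
  intro y hy
  -- g maps Icc c d into Icc a b
  have hg_mem : ∀ t ∈ Icc c d, g t ∈ Icc a b := by
    intro t ht
    obtain ⟨x, hx, rfl⟩ := hφ_bij.surjOn ht
    rwa [hgf x hx]
  -- g is monotone on Icc c d
  have hg_mono : ∀ t₁ ∈ Icc c d, ∀ t₂ ∈ Icc c d, t₁ ≤ t₂ → g t₁ ≤ g t₂ := by
    intro t₁ h₁ t₂ h₂ h
    by_contra hlt
    push_neg at hlt
    have := hφ_mono (hg_mem _ h₂) (hg_mem _ h₁) hlt
    rw [hfg _ h₁, hfg _ h₂] at this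
    exact absurd h (not_le.2 this)
  -- order iff between φ and g
  have hle_iff : ∀ x ∈ Icc a b, ∀ t ∈ Icc c d, (φ x ≤ t ↔ x ≤ g t) := by
    intro x hx t ht
    nth_rewrite 1 [← hfg t ht]
    exact hφ_mono.le_iff_le hx (hg_mem t ht)
  have hlt_iff : ∀ x ∈ Icc a b, ∀ t ∈ Icc c d, (t < φ x ↔ g t < x) := by
    intro x hx t ht
    nth_rewrite 1 [← hfg t ht]
    exact hφ_mono.lt_iff_lt (hg_mem t ht) hx
  set s := g y with hs_def
  have hs_mem : s ∈ Icc a b := hg_mem y hy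
  have hφs : φ s = y := hfg y hy
  have hga : g c = a := by rw [← hφa]; exact hgf a ⟨le_rfl, hab.le⟩
  have hcy : c ≤ y := hy.1
  have hIcc_sub : Icc c y ⊆ Icc c d := Icc_subset_Icc le_rfl hy.2
  -- the clamped version of g
  set G : ℝ → ℝ := fun t => g (min (max t c) y) with hG_def
  have hclamp_mem : ∀ t : ℝ, min (max t c) y ∈ Icc c y := fun t =>
    ⟨le_min (le_max_right _ _) hcy, min_le_right _ _⟩
  have hG_mono : Monotone G := by
    intro t₁ t₂ h
    exact hg_mono _ (hIcc_sub (hclamp_mem t₁)) _ (hIcc_sub (hclamp_mem t₂))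
      (min_le_min (max_le_max h le_rfl) le_rfl)
  have hG_meas : Measurable G := hG_mono.measurable
  have hG_eq : ∀ t ∈ Icc c y, G t = g t := by
    intro t ht
    simp only [hG_def, max_eq_left ht.1, min_eq_left ht.2]
  -- φ maps Ioc a s into Ioc c y
  have hφ_maps : ∀ x ∈ Ioc a s, φ x ∈ Ioc c y := by
    intro x hx
    have hxab : x ∈ Icc a b := ⟨hx.1.le, hx.2.trans hs_mem.2⟩
    constructor
    · rw [← hφa]; exact hφ_mono ⟨le_rfl, hab.le⟩ hxab hx.1
    · rw [← hφs]; exact hφ_mono.monotoneOn hxab hs_mem hx.2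
  -- the key pushforward identity
  have key : Measure.map φ (φ.measure.restrict (Ioc a s)) = volume.restrict (Ioc c y) := by
    refine Measure.ext_of_Ioc' _ _ (fun u v huv => ?_) (fun u v huv => ?_)
    · rw [Measure.map_apply φ.mono.measurable measurableSet_Ioc,
        Measure.restrict_apply (φ.mono.measurable measurableSet_Ioc)]
      exact ((measure_mono inter_subset_right).trans_lt (by simp [φ.measure_Ioc])).ne
    · have hmemy : ∀ w : ℝ, min (max w c) y ∈ Icc c d := fun w => hIcc_sub (hclamp_mem w)
      set u' := min (max u c) y with hu'
      set v' := min (max v c) y with hv'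
      have hset : φ ⁻¹' (Ioc u v) ∩ Ioc a s = Ioc (g u') (g v') := by
        ext x
        simp only [mem_inter_iff, mem_preimage, mem_Ioc]
        constructor
        · rintro ⟨⟨hu1, hv1⟩, hx⟩
          have hφx := hφ_maps x ⟨hx.1, hx.2⟩
          have hxab : x ∈ Icc a b := ⟨hx.1.le, hx.2.trans hs_mem.2⟩
          constructor
          · rw [← hlt_iff x hxab u' (hmemy u)]
            exact (min_le_left _ _).trans_lt (max_lt hu1 hφx.1)
          · rw [← hle_iff x hxab v' (hmemy v)]
            exact le_min (hv1.trans (le_max_left _ _)) hφx.2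
        · rintro ⟨h1, h2⟩
          have hgu'_mem : g u' ∈ Icc a b := hg_mem _ (hmemy u)
          have hgv'_mem : g v' ∈ Icc a b := hg_mem _ (hmemy v)
          have hxab : x ∈ Icc a b := ⟨(hgu'_mem.1.trans_lt h1).le, h2.trans hgv'_mem.2⟩
          have hu'lt : u' < φ x := (hlt_iff x hxab u' (hmemy u)).2 h1
          have hv'ge : φ x ≤ v' := (hle_iff x hxab v' (hmemy v)).2 h2
          have hxa : a < x := by
            have hga_le : g c ≤ g u' := hg_mono c ⟨le_rfl, hcd.le⟩ u' (hmemy u) (hmemy u).1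
            rw [hga] at hga_le
            exact hga_le.trans_lt h1
          have hxs : x ≤ s := h2.trans (hg_mono v' (hmemy v) y hy (min_le_right _ _))
          have hφx := hφ_maps x ⟨hxa, hxs⟩
          refine ⟨⟨?_, ?_⟩, hxa, hxs⟩
          · -- u < φ x
            have hu'y : u' < y := hu'lt.trans_le hφx.2
            have : max u c < y := by
              by_contra hcon
              push_neg at hcon
              rw [hu', min_eq_right hcon] at hu'y
              exact lt_irrefl y hu'y
            have hu'eq : u' = max u c := min_eq_left this.le
            calc u ≤ max u c := le_max_left _ _
              _ = u' := hu'eq.symm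
              _ < φ x := hu'lt
          · -- φ x ≤ v
            rcases le_total v c with hvc | hcv
            · exfalso
              have : φ x ≤ c := hv'ge.trans ((min_le_left _ _).trans (max_le hvc le_rfl))
              exact absurd hφx.1 (not_lt.2 this)
            · exact hv'ge.trans ((min_le_left _ _).trans_eq (max_eq_left hcv))
      rw [Measure.map_apply φ.mono.measurable measurableSet_Ioc,
        Measure.restrict_apply (φ.mono.measurable measurableSet_Ioc),
        Measure.restrict_apply measurableSet_Ioc, hset, φ.measure_Ioc,
        hfg u' (hmemy u), hfg v' (hmemy v), Ioc_inter_Ioc, Real.volume_Ioc]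
      -- ofReal (v' - u') = ofReal (min v y - max u c)
      rw [hu', hv']
      rcases le_total y u with hyu | huy
      · rw [min_eq_right (hyu.trans (le_max_left u c)),
          ENNReal.ofReal_of_nonpos (sub_nonpos.2 (min_le_right (max v c) y)),
          ENNReal.ofReal_of_nonpos
            (sub_nonpos.2 ((min_le_right v y).trans (hyu.trans (le_max_left u c))))]
      · have humax : max u c ≤ y := max_le huy hcy
        rw [min_eq_left humax]
        rcases le_total v c with hvc | hcv
        · rw [max_eq_right hvc, min_eq_left hcy,
            ENNReal.ofReal_of_nonpos (sub_nonpos.2 (le_max_right u c)),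
            ENNReal.ofReal_of_nonpos
              (sub_nonpos.2 ((min_le_left v y).trans (hvc.trans (le_max_right u c))))]
        · rw [max_eq_left hcv]
  -- now transfer the integral
  rw [intervalIntegral.integral_of_le hcy]
  calc ∫ t in Ioc c y, g t
      = ∫ t in Ioc c y, G t := by
        refine setIntegral_congr_fun measurableSet_Ioc (fun t ht => ?_)
        exact (hG_eq t (Ioc_subset_Icc_self ht)).symm
    _ = ∫ t, G t ∂(volume.restrict (Ioc c y)) := rfl
    _ = ∫ t, G t ∂(Measure.map φ (φ.measure.restrict (Ioc a s))) := by rw [key]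
    _ = ∫ x, G (φ x) ∂(φ.measure.restrict (Ioc a s)) :=
        integral_map φ.mono.measurable.aemeasurable hG_meas.aestronglyMeasurable
    _ = ∫ x in Ioc a s, x ∂φ.measure := by
        refine setIntegral_congr_fun measurableSet_Ioc (fun x hx => ?_)
        rw [hG_eq _ (Ioc_subset_Icc_self (hφ_maps x hx)),
          hgf x ⟨hx.1.le, hx.2.trans hs_mem.2⟩]
end

section
/- (Stieltjes integration by parts) Let f : [a,b] → ℝ be monotone and continuous and g(x) = x. Then ∫_{a}^{b} g df + ∫_{a}^{b} f dg = f(b)·b − f(a)·a, i.e., ∫_{a}^{b} x df(x) = b·f(b) − a·f(a) − ∫_{a}^{b} f(x) dx. -/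
open Set MeasureTheory intervalIntegral

theorem stieltjes_integration_by_parts
    (a b : ℝ) (hab : a ≤ b)
    (φ : StieltjesFunction ℝ)
    (hφ_cont : Continuous φ) :
    ∫ x in Set.Ioc a b, x ∂φ.measure =
      b * φ b - a * φ a - ∫ x in a..b, φ x := by
  set μ : Measure ℝ := φ.measure.restrict (Set.Ioc a b) with hμ
  have hmono : Monotone φ := φ.mono
  have hfin : IsFiniteMeasure μ := by
    constructor
    rw [hμ, Measure.restrict_apply_univ, φ.measure_Ioc]
    exact ENNReal.ofReal_lt_top
  have hmem : ∀ᵐ x ∂μ, x ∈ Set.Ioc a b := ae_restrict_mem measurableSet_Ioc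
  have hbd : ∀ᵐ x ∂μ, ‖x - a‖ ≤ b - a := by
    filter_upwards [hmem] with x hx
    rw [Real.norm_eq_abs, abs_of_nonneg (by linarith [hx.1])]
    linarith [hx.2]
  have hint : Integrable (fun x => x - a) μ :=
    Integrable.mono' (integrable_const (b - a))
      ((measurable_id.sub measurable_const).aestronglyMeasurable) hbd
  have hnn : 0 ≤ᵐ[μ] fun x => x - a := by
    filter_upwards [hmem] with x hx
    simp only [Pi.zero_apply]
    linarith [hx.1]
  have key := hint.integral_eq_integral_meas_lt hnn
  -- identify the integrand of the layercake integral
  have hmeas : Set.EqOn (fun t => (μ {x : ℝ | t < x - a}).toReal)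
      (fun t => max (φ b - φ (a + t)) 0) (Set.Ioi (0:ℝ)) := by
    intro t ht
    have ht' : (0:ℝ) < t := Set.mem_Ioi.mp ht
    have hset : {x : ℝ | t < x - a} = Set.Ioi (a + t) := by
      ext x; simp only [Set.mem_setOf_eq, Set.mem_Ioi]; constructor <;> intro h <;> linarith
    have hinter : Set.Ioi (a + t) ∩ Set.Ioc a b = Set.Ioc (a + t) b := by
      rw [Set.inter_comm, Set.Ioc_inter_Ioi, max_eq_right (by linarith)]
    simp only [hset, hμ, Measure.restrict_apply measurableSet_Ioi, hinter, φ.measure_Ioc,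
      ENNReal.toReal_ofReal']
  rw [setIntegral_congr_fun measurableSet_Ioi (f := fun t => μ.real {x : ℝ | t < x - a}) hmeas] at key
  -- split the layercake integral
  have hg_cont : Continuous fun t => max (φ b - φ (a + t)) 0 :=
    ((continuous_const.sub (hφ_cont.comp (continuous_const.add continuous_id))).max
      continuous_const)
  have hsplit : Set.Ioc (0:ℝ) (b - a) ∪ Set.Ioi (b - a) = Set.Ioi (0:ℝ) :=
    Set.Ioc_union_Ioi_eq_Ioi (by linarith)
  have hzero : ∫ t in Set.Ioi (b - a), max (φ b - φ (a + t)) 0 = 0 := by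
    apply setIntegral_eq_zero_of_forall_eq_zero
    intro t ht
    exact max_eq_right (by linarith [hmono (by linarith [Set.mem_Ioi.mp ht] : b ≤ a + t)])
  have hint1 : IntegrableOn (fun t => max (φ b - φ (a + t)) 0) (Set.Ioc 0 (b - a)) :=
    hg_cont.integrableOn_Ioc
  have hint2 : IntegrableOn (fun t => max (φ b - φ (a + t)) 0) (Set.Ioi (b - a)) := by
    apply (integrableOn_zero (s := Set.Ioi (b - a))).congr_fun _ measurableSet_Ioi
    intro t ht
    have h1 : φ b ≤ φ (a + t) := hmono (by linarith [Set.mem_Ioi.mp ht])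
    show (0:ℝ) = max (φ b - φ (a + t)) 0
    exact (max_eq_right (by linarith)).symm
  have hsum : ∫ t in Set.Ioi (0:ℝ), max (φ b - φ (a + t)) 0 =
      (∫ t in Set.Ioc (0:ℝ) (b - a), max (φ b - φ (a + t)) 0) +
      ∫ t in Set.Ioi (b - a), max (φ b - φ (a + t)) 0 := by
    rw [← hsplit, setIntegral_union (Set.Ioc_disjoint_Ioi le_rfl) measurableSet_Ioi hint1 hint2]
  have hIoc : ∫ t in Set.Ioc (0:ℝ) (b - a), max (φ b - φ (a + t)) 0 =
      ∫ t in Set.Ioc (0:ℝ) (b - a), (φ b - φ (a + t)) := by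
    apply setIntegral_congr_fun measurableSet_Ioc
    intro t ht
    exact max_eq_left (by linarith [hmono (by linarith [ht.2] : a + t ≤ b)])
  have hIcc : ∫ t in Set.Ioc (0:ℝ) (b - a), (φ b - φ (a + t)) =
      (b - a) * φ b - ∫ x in a..b, φ x := by
    rw [← intervalIntegral.integral_of_le (by linarith : (0:ℝ) ≤ b - a)]
    rw [intervalIntegral.integral_sub intervalIntegrable_const
      ((by fun_prop : Continuous fun x => φ (a + x)).intervalIntegrable _ _)]
    rw [intervalIntegral.integral_const, intervalIntegral.integral_comp_add_left]
    norm_num [mul_comm]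
  -- the total mass
  have htot : ∫ x in Set.Ioc a b, (a:ℝ) ∂φ.measure = a * (φ b - φ a) := by
    rw [setIntegral_const, measureReal_def, φ.measure_Ioc,
      ENNReal.toReal_ofReal (by linarith [hmono hab]), smul_eq_mul, mul_comm]
  have hdecomp : ∫ x in Set.Ioc a b, x ∂φ.measure =
      (∫ x, (x - a) ∂μ) + ∫ x in Set.Ioc a b, (a:ℝ) ∂φ.measure := by
    rw [← integral_add hint (integrable_const a)]
    simp [hμ]
  rw [hdecomp, key, hsum, hzero, hIoc, hIcc, htot]
  ring
end

section
/- (Generalized formula) Let f : [a,b] → [c,d] be a C¹ strictly increasing bijection and H : ℝ × ℝ → ℝ be C¹. Then ∫_{c}^{y} H(t, f⁻¹(t)) dt = y·H(y, f⁻¹(y)) − c·H(c, f⁻¹(c)) − ∫_{a}^{f⁻¹(y)} f(x) · (d/dx)[H(f(x), x)] dx for y ∈ [c,d]. -/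
open Set MeasureTheory intervalIntegral

theorem generalized_inverse_integral_formula
    (a b c d : ℝ) (hab : a < b) (hcd : c < d)
    (f g : ℝ → ℝ) (H : ℝ × ℝ → ℝ)
    (hf_smooth : ContDiffOn ℝ 1 f (Icc a b))
    (hf_mono : StrictMonoOn f (Icc a b))
    (hf_bij : Set.BijOn f (Icc a b) (Icc c d))
    (hgf : ∀ x ∈ Icc a b, g (f x) = x)
    (hfg : ∀ y ∈ Icc c d, f (g y) = y)
    (hH : ContDiff ℝ 1 H) :
    ∀ y ∈ Icc c d,
      ∫ t in c..y, H (t, g t) =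
        y * H (y, g y) - c * H (c, g c) -
          ∫ x in a..(g y), f x * deriv (fun x => H (f x, x)) x := by
  intro y hy
  have hamem : a ∈ Icc a b := ⟨le_refl a, hab.le⟩
  have hbmem : b ∈ Icc a b := ⟨hab.le, le_refl b⟩
  -- f a = c
  have hfa : f a = c := by
    obtain ⟨x, hx, hfx⟩ := hf_bij.surjOn ⟨le_refl c, hcd.le⟩
    have h1 : f a ≤ f x := hf_mono.monotoneOn hamem hx hx.1
    have h2 : (f a) ∈ Icc c d := hf_bij.mapsTo hamem
    exact le_antisymm (hfx ▸ h1) h2.1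
  -- g maps Icc c d into Icc a b
  have hmapsg : ∀ t ∈ Icc c d, g t ∈ Icc a b := by
    intro t ht
    obtain ⟨x, hx, rfl⟩ := hf_bij.surjOn ht
    rw [hgf x hx]; exact hx
  have hge : g y ∈ Icc a b := hmapsg y hy
  have hae : a ≤ g y := hge.1
  have heb : g y ≤ b := hge.2
  have hfe : f (g y) = y := hfg y hy
  have hgc : g c = a := by rw [← hfa, hgf a hamem]
  -- continuity of g on Icc c d
  have hgcont : ContinuousOn g (Icc c d) := by
    let e : (Icc a b) ≃o (Icc c d) :=
      { toFun := fun x => ⟨f x, hf_bij.mapsTo x.2⟩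
        invFun := fun t => ⟨g t, hmapsg t t.2⟩
        left_inv := fun x => Subtype.ext (hgf x x.2)
        right_inv := fun t => Subtype.ext (hfg t t.2)
        map_rel_iff' := by
          intro x z
          exact hf_mono.le_iff_le x.2 z.2 }
    have hsymm : Continuous (e.symm) := OrderIso.continuous e.symm
    rw [continuousOn_iff_continuous_restrict]
    exact continuous_subtype_val.comp hsymm
  -- derivative data for f
  set f' : ℝ → ℝ := derivWithin f (Icc a b) with hf'def
  have hucc : UniqueDiffOn ℝ (Icc a b) := uniqueDiffOn_Icc hab
  have hfc : ContinuousOn f (Icc a b) := hf_smooth.continuousOn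
  have hf'cont : ContinuousOn f' (Icc a b) :=
    hf_smooth.continuousOn_derivWithin hucc le_rfl
  have hdAt : ∀ x ∈ Ioo a b, HasDerivAt f (f' x) x := by
    intro x hx
    have h1 : HasDerivWithinAt f (f' x) (Icc a b) x :=
      (hf_smooth.differentiableOn one_ne_zero x (Ioo_subset_Icc_self hx)).hasDerivWithinAt
    exact h1.hasDerivAt (Icc_mem_nhds hx.1 hx.2)
  -- the composite G and its derivative
  set G : ℝ → ℝ := fun x => H (f x, x) with hGdef
  set ψ : ℝ → ℝ := fun x => (fderiv ℝ H (f x, x)) (f' x, 1) with hψdef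
  have hGd : ∀ x ∈ Ioo a b, HasDerivAt G (ψ x) x := by
    intro x hx
    have h1 : HasDerivAt (fun x => (f x, x)) (f' x, 1) x :=
      (hdAt x hx).prodMk (hasDerivAt_id x)
    have h2 := HasFDerivAt.comp_hasDerivAt_of_eq x
      ((hH.differentiable one_ne_zero (f x, x)).hasFDerivAt) h1 rfl
    exact h2
  have hDeq : ∀ x ∈ Ioo a b, deriv G x = ψ x := fun x hx => (hGd x hx).deriv
  have hGcont : ContinuousOn G (Icc a b) :=
    hH.continuous.comp_continuousOn (hfc.prodMk continuousOn_id)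
  have hψcont : ContinuousOn ψ (Icc a b) := by
    have h1 : ContinuousOn (fun x => fderiv ℝ H (f x, x)) (Icc a b) :=
      (hH.continuous_fderiv one_ne_zero).comp_continuousOn (hfc.prodMk continuousOn_id)
    exact h1.clm_apply (hf'cont.prodMk continuousOn_const)
  have hsubset : Icc a (g y) ⊆ Icc a b := Icc_subset_Icc le_rfl heb
  have hIoosub : Ioo a (g y) ⊆ Ioo a b := Ioo_subset_Ioo le_rfl heb
  -- a.e. equality of deriv G and ψ on Ioc a (g y)
  have haeeq : ∀ᵐ x : ℝ, x ∈ Set.uIoc a (g y) → f x * deriv G x = f x * ψ x := by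
    have hb0 : ∀ᵐ x : ℝ, x ≠ b := by
      rw [ae_iff]
      have hset : {x : ℝ | ¬ x ≠ b} = {b} := by ext x; simp
      rw [hset]; exact measure_singleton b
    filter_upwards [hb0] with x hxb hx
    rw [uIoc_of_le hae] at hx
    have hx' : x ∈ Ioo a b := ⟨hx.1, lt_of_le_of_ne (le_trans hx.2 heb) hxb⟩
    rw [hDeq x hx']
  -- substitution
  have hsub : ∫ u in (f a)..(f (g y)), H (u, g u) = ∫ x in a..(g y), G x * f' x := by
    have huIcc : uIcc a (g y) = Icc a (g y) := uIcc_of_le hae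
    have hgM : ContinuousOn (fun t => H (t, g t)) (f '' uIcc a (g y)) := by
      refine (hH.continuous.comp_continuousOn (continuousOn_id.prodMk hgcont)).mono ?_
      rw [huIcc]
      calc f '' Icc a (g y) ⊆ f '' Icc a b := image_mono hsubset
        _ = Icc c d := hf_bij.image_eq
    rw [← integral_comp_mul_deriv'' (f := f) (f' := f')
        (hfc.mono (huIcc ▸ hsubset))
        (by
          intro x hx
          rw [min_eq_left hae, max_eq_right hae] at hx
          exact (hdAt x (hIoosub hx)).hasDerivWithinAt)
        (hf'cont.mono (huIcc ▸ hsubset)) hgM]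
    apply integral_congr
    intro x hx
    have hx' : x ∈ Icc a b := hsubset (huIcc ▸ hx)
    simp only [Function.comp, hgf x hx', hGdef]
  rw [hfa, hfe] at hsub
  -- FTC for F = f * G
  have hFTC : ∫ x in a..(g y), (f' x * G x + f x * ψ x) =
      y * H (y, g y) - c * H (c, g c) := by
    have h1 : ∫ x in a..(g y), (f' x * G x + f x * ψ x) =
        f (g y) * G (g y) - f a * G a := by
      refine integral_eq_sub_of_hasDeriv_right_of_le (f := fun x => f x * G x)
        (f' := fun x => f' x * G x + f x * ψ x) hae ?_ ?_ ?_
      · exact ((hfc.mono hsubset).mul (hGcont.mono hsubset))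
      · intro x hx
        exact (((hdAt x (hIoosub hx)).mul (hGd x (hIoosub hx)))).hasDerivWithinAt
      · apply ContinuousOn.intervalIntegrable
        rw [uIcc_of_le hae]
        exact ((hf'cont.mul hGcont).add (hfc.mul hψcont)).mono hsubset
    rw [h1, hfe, hfa]
    have hGy : G (g y) = H (y, g y) := by rw [hGdef]; simp [hfe]
    have hGa : G a = H (c, g c) := by rw [hGdef]; simp [hfa, hgc]
    rw [hGy, hGa]
  -- integrability of the two pieces
  have hint1 : IntervalIntegrable (fun x => f' x * G x) volume a (g y) := by
    apply ContinuousOn.intervalIntegrable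
    rw [uIcc_of_le hae]
    exact (hf'cont.mul hGcont).mono hsubset
  have hint2' : IntervalIntegrable (fun x => f x * ψ x) volume a (g y) := by
    apply ContinuousOn.intervalIntegrable
    rw [uIcc_of_le hae]
    exact (hfc.mul hψcont).mono hsubset
  have hsplit : ∫ x in a..(g y), (f' x * G x + f x * ψ x) =
      (∫ x in a..(g y), f' x * G x) + ∫ x in a..(g y), f x * ψ x :=
    integral_add hint1 hint2'
  have hψD : ∫ x in a..(g y), f x * ψ x = ∫ x in a..(g y), f x * deriv G x :=
    (intervalIntegral.integral_congr_ae haeeq).symm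
  have hcomm : ∫ x in a..(g y), G x * f' x = ∫ x in a..(g y), f' x * G x := by
    apply integral_congr; intro x _; ring
  rw [hsub, hcomm]
  have : (∫ x in a..(g y), f' x * G x) =
      (y * H (y, g y) - c * H (c, g c)) - ∫ x in a..(g y), f x * ψ x := by
    rw [← hFTC, hsplit]; ring
  rw [this, hψD]
end
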